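/- arXiv:1501.03466 — 4 statements merged into one kernel-verified Lean document; each statement's English description precedes it below -/
import Mathlib

section
/- A linear operator R : c₀ → c₀ is bounded if and only if there exists a doubly indexed family of reals (b i j), i, j ∈ ℕ, such that (1) for every i the row (b i j)_j is absolutely summable, (2) sup_i Σ_j |b i j| < ∞, (3) for every j the column (b i j)_i converges to 0, and (4) (R f) i = Σ_j b i j · f j for every f ∈ c₀ and every i ∈ ℕ. -/
open Filter Topology

noncomputable section

/-- The Banach space `ℓ∞` of bounded real sequences with the sup norm,
realized as bounded (continuous) functions on the discrete space `ℕ`. -/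
abbrev ellInfty : Type := BoundedContinuousFunction ℕ ℝ

/-- `c₀`, the subspace of `ℓ∞` of sequences converging to `0`. -/
def czero : Submodule ℝ ellInfty where
  carrier := {f | Tendsto (⇑f) atTop (𝓝 (0 : ℝ))}
  add_mem' := by intro a b ha hb; have h := ha.add hb; rw [add_zero] at h; exact h
  zero_mem' := by
    show Tendsto _ _ _
    simp only [BoundedContinuousFunction.coe_zero]
    exact tendsto_const_nhds
  smul_mem' := by intro c f hf; simpa using hf.const_mul c

lemma mem_czero_iff {f : ellInfty} : f ∈ czero ↔ Tendsto (⇑f) atTop (𝓝 (0 : ℝ)) := Iff.rfl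

/-- The standard basis sequences. -/
def delta (j : ℕ) : ellInfty :=
  BoundedContinuousFunction.ofNormedAddCommGroupDiscrete
    (fun n => if n = j then (1 : ℝ) else 0) 1 (by intro n; dsimp; split <;> simp)

@[simp] lemma delta_apply (j n : ℕ) : delta j n = if n = j then (1 : ℝ) else 0 := rfl

lemma delta_mem (j : ℕ) : delta j ∈ czero := by
  rw [mem_czero_iff]
  have h : (fun n => (0 : ℝ)) =ᶠ[atTop] ⇑(delta j) := by
    filter_upwards [eventually_gt_atTop j] with n hn
    simp [Nat.ne_of_gt hn]
  exact tendsto_const_nhds.congr' h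

def deltaC (j : ℕ) : czero := ⟨delta j, delta_mem j⟩

@[simp] lemma coe_sum_apply (s : Finset ℕ) (g : ℕ → czero) (k : ℕ) :
    ((↑(∑ j ∈ s, g j) : ellInfty) : ℕ → ℝ) k = ∑ j ∈ s, ((g j : ellInfty) : ℕ → ℝ) k := by
  induction s using Finset.cons_induction with
  | empty => simp
  | cons a s ha ih => simp [Finset.sum_cons, ih]

@[simp] lemma coe_smul_apply (c : ℝ) (x : czero) (k : ℕ) :
    ((↑(c • x) : ellInfty) : ℕ → ℝ) k = c * ((x : ellInfty) : ℕ → ℝ) k := rfl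

lemma norm_czero (x : czero) : ‖x‖ = ‖(x : ellInfty)‖ := rfl

/-- truncation of a sequence -/
def truncC (f : czero) (n : ℕ) : czero := ∑ j ∈ Finset.range n, ((f : ellInfty) j) • deltaC j

lemma truncC_apply (f : czero) (n k : ℕ) :
    ((truncC f n : ellInfty) : ℕ → ℝ) k = if k < n then (f : ellInfty) k else 0 := by
  classical
  rw [truncC, coe_sum_apply]
  simp only [coe_smul_apply, deltaC, delta_apply, mul_ite, mul_one, mul_zero]
  rw [Finset.sum_ite_eq (Finset.range n) k fun j => (f : ellInfty) j]
  simp [Finset.mem_range]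

lemma tendsto_truncC (f : czero) : Tendsto (fun n => truncC f n) atTop (𝓝 f) := by
  rw [tendsto_subtype_rng, tendsto_iff_norm_sub_tendsto_zero,
    NormedAddCommGroup.tendsto_nhds_zero]
  intro ε hε
  have hf : Tendsto (⇑(f : ellInfty)) atTop (𝓝 (0 : ℝ)) := f.2
  have : ∀ᶠ j in atTop, |(f : ellInfty) j| < ε / 2 := by
    have := Metric.tendsto_atTop.1 hf (ε / 2) (by linarith)
    obtain ⟨N, hN⟩ := this
    filter_upwards [eventually_ge_atTop N] with j hj
    simpa [Real.dist_eq] using hN j hj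
  obtain ⟨N, hN⟩ := eventually_atTop.1 this
  filter_upwards [eventually_ge_atTop N] with n hn
  have hle : ‖(truncC f n : ellInfty) - (f : ellInfty)‖ ≤ ε / 2 := by
    rw [BoundedContinuousFunction.norm_le (by linarith)]
    intro k
    have : ((truncC f n : ellInfty) - (f : ellInfty)) k
        = (if k < n then (f : ellInfty) k else 0) - (f : ellInfty) k := by
      rw [BoundedContinuousFunction.sub_apply, truncC_apply]
    rw [Real.norm_eq_abs, this]
    by_cases hk : k < n
    · simp only [hk, if_true, sub_self, abs_zero]; linarith
    · simp only [hk, if_false, zero_sub, abs_neg]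
      exact (hN k (le_trans hn (not_lt.1 hk))).le
  rw [norm_norm]
  linarith

lemma norm_apply_le (x : czero) (k : ℕ) : |(x : ellInfty) k| ≤ ‖x‖ :=
  (x : ellInfty).norm_coe_le_norm k

set_option maxHeartbeats 4000000 in
/-- A linear operator `R : c₀ → c₀` is bounded (continuous) iff it is given by a matrix
`(b i j)` with absolutely summable rows, uniformly bounded row `ℓ₁`-norms and columns
converging to `0`. -/
theorem statement0 (R : czero →ₗ[ℝ] czero) :
    Continuous R ↔
      ∃ b : ℕ → ℕ → ℝ,
        (∀ i, Summable fun j => |b i j|) ∧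
        (∃ C : ℝ, ∀ i, (∑' j, |b i j|) ≤ C) ∧
        (∀ j, Tendsto (fun i => b i j) atTop (𝓝 (0 : ℝ))) ∧
        (∀ f : czero, ∀ i : ℕ, (R f : ellInfty) i = ∑' j, b i j * (f : ellInfty) j) := by
  constructor
  · intro hR
    obtain ⟨M, hM0, hM⟩ := SemilinearMapClass.bound_of_continuous (𝕜 := ℝ) (𝕜₂ := ℝ) (E := czero) (F := czero) (σ₁₂ := RingHom.id ℝ) (𝓕 := czero →ₗ[ℝ] czero) R hR
    set b : ℕ → ℕ → ℝ := fun i j => ((R (deltaC j) : ellInfty) : ℕ → ℝ) i with hbdef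
    -- key finite-sum estimate
    have key : ∀ (i : ℕ) (s : Finset ℕ), ∑ j ∈ s, |b i j| ≤ M := by
      intro i s
      classical
      set ε : ℕ → ℝ := fun j => if 0 ≤ b i j then (1 : ℝ) else -1 with hεdef
      set g : czero := ∑ j ∈ s, ε j • deltaC j with hgdef
      have hg_apply : ∀ k, ((g : ellInfty) : ℕ → ℝ) k = if k ∈ s then ε k else 0 := by
        intro k
        rw [hgdef, coe_sum_apply]
        simp only [coe_smul_apply, deltaC, delta_apply, mul_ite, mul_one, mul_zero]
        rw [Finset.sum_ite_eq s k ε]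
      have hg_norm : ‖g‖ ≤ 1 := by
        rw [norm_czero, BoundedContinuousFunction.norm_le zero_le_one]
        intro k
        rw [Real.norm_eq_abs, hg_apply]
        split
        · rw [hεdef]; dsimp; split <;> simp
        · simp
      have hRg : ((R g : ellInfty) : ℕ → ℝ) i = ∑ j ∈ s, |b i j| := by
        rw [hgdef, map_sum, coe_sum_apply]
        refine Finset.sum_congr rfl fun j _ => ?_
        rw [map_smul, coe_smul_apply, hεdef]
        dsimp only
        split
        · rw [one_mul, abs_of_nonneg (by assumption)]
        · rw [neg_one_mul, abs_of_neg (lt_of_not_ge (by assumption))]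
      calc ∑ j ∈ s, |b i j| = ((R g : ellInfty) : ℕ → ℝ) i := hRg.symm
        _ ≤ |((R g : ellInfty) : ℕ → ℝ) i| := le_abs_self _
        _ ≤ ‖R g‖ := norm_apply_le _ _
        _ ≤ M * ‖g‖ := hM g
        _ ≤ M * 1 := mul_le_mul_of_nonneg_left hg_norm hM0.le
        _ = M := mul_one M
    have hrow : ∀ i, Summable fun j => |b i j| := fun i =>
      summable_of_sum_le (fun j => abs_nonneg _) (key i)
    refine ⟨b, hrow, ⟨M, fun i => Summable.tsum_le_of_sum_le (hrow i) (key i)⟩, ?_, ?_⟩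
    · intro j
      exact (R (deltaC j)).2
    · intro f i
      have hsum : Summable fun j => b i j * (f : ellInfty) j := by
        refine Summable.of_norm_bounded ((hrow i).mul_right ‖f‖) fun j => ?_
        rw [Real.norm_eq_abs, abs_mul]
        exact mul_le_mul_of_nonneg_left (norm_apply_le f j) (abs_nonneg _)
      -- evaluation at i is continuous on czero
      have hev : Continuous fun x : czero => ((R x : ellInfty) : ℕ → ℝ) i := by
        exact (continuous_eval_const i).comp
          (continuous_subtype_val.comp hR)
      have h2 : Tendsto (fun n => ((R (truncC f n) : ellInfty) : ℕ → ℝ) i) atTop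
          (𝓝 (((R f : ellInfty) : ℕ → ℝ) i)) :=
        (hev.tendsto f).comp (tendsto_truncC f)
      have h3 : ∀ n, ((R (truncC f n) : ellInfty) : ℕ → ℝ) i
          = ∑ j ∈ Finset.range n, b i j * (f : ellInfty) j := by
        intro n
        rw [truncC, map_sum, coe_sum_apply]
        refine Finset.sum_congr rfl fun j _ => ?_
        rw [map_smul, coe_smul_apply, mul_comm]
      have h4 : Tendsto (fun n => ∑ j ∈ Finset.range n, b i j * (f : ellInfty) j) atTop
          (𝓝 (∑' j, b i j * (f : ellInfty) j)) := hsum.hasSum.tendsto_sum_nat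
      have h2' : Tendsto (fun n => ∑ j ∈ Finset.range n, b i j * (f : ellInfty) j) atTop
          (𝓝 (((R f : ellInfty) : ℕ → ℝ) i)) := by
        refine h2.congr fun n => h3 n
      exact tendsto_nhds_unique h2' h4
  · rintro ⟨b, hrow, ⟨C, hC⟩, -, hrep⟩
    have hC0 : 0 ≤ C := le_trans (tsum_nonneg fun j => abs_nonneg _) (hC 0)
    refine AddMonoidHomClass.continuous_of_bound R C fun x => ?_
    rw [norm_czero, BoundedContinuousFunction.norm_le (mul_nonneg hC0 (norm_nonneg x))]
    intro i
    have hsum : Summable fun j => b i j * (x : ellInfty) j := by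
      refine Summable.of_norm_bounded ((hrow i).mul_right ‖x‖) fun j => ?_
      rw [Real.norm_eq_abs, abs_mul]
      exact mul_le_mul_of_nonneg_left (norm_apply_le x j) (abs_nonneg _)
    have hsumnorm : Summable fun j => ‖b i j * (x : ellInfty) j‖ := by
      refine Summable.of_norm_bounded ((hrow i).mul_right ‖x‖) fun j => ?_
      rw [norm_norm, Real.norm_eq_abs, abs_mul]
      exact mul_le_mul_of_nonneg_left (norm_apply_le x j) (abs_nonneg _)
    calc ‖((R x : ellInfty) : ℕ → ℝ) i‖ = ‖∑' j, b i j * (x : ellInfty) j‖ := by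
          rw [hrep x i]
      _ ≤ ∑' j, ‖b i j * (x : ellInfty) j‖ := norm_tsum_le_tsum_norm hsumnorm
      _ ≤ ∑' j, |b i j| * ‖x‖ := by
          refine Summable.tsum_le_tsum (fun j => ?_) hsumnorm ((hrow i).mul_right ‖x‖)
          rw [Real.norm_eq_abs, abs_mul]
          exact mul_le_mul_of_nonneg_left (norm_apply_le x j) (abs_nonneg _)
      _ = (∑' j, |b i j|) * ‖x‖ := tsum_mul_right
      _ ≤ C * ‖x‖ := mul_le_mul_of_nonneg_right (hC i) (norm_nonneg x)
end
end

section
/- A bounded linear operator R : ℓ∞ → ℓ∞ is given by a c₀-matrix if and only if R maps c₀ into c₀ and the restriction of R to the closed unit ball of ℓ∞ is continuous from the topology of pointwise convergence on the ball to the topology of pointwise convergence on ℓ∞. -/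
open Filter Topology

noncomputable section

/-- `R : ℓ∞ → ℓ∞` is given by the `c₀`-matrix `b`: the rows of `b` are absolutely summable
with uniformly bounded `ℓ₁`-norms, the columns of `b` converge to `0`, and `R` acts by
matrix multiplication by `b`. -/
structure IsC0Matrix (R : ellInfty →L[ℝ] ellInfty) (b : ℕ → ℕ → ℝ) : Prop where
  rows_summable : ∀ i, Summable fun j => |b i j|
  rows_bounded : ∃ C : ℝ, ∀ i, (∑' j, |b i j|) ≤ C
  cols_vanish : ∀ j, Tendsto (fun i => b i j) atTop (𝓝 (0 : ℝ))
  matrix_repr : ∀ f : ellInfty, ∀ i, R f i = ∑' j, b i j * f j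

/-- The topology of pointwise convergence (product topology) on the closed unit ball
of `ℓ∞`, induced from `ℝ^ℕ`. -/
def ballPointwiseTopology : TopologicalSpace {g : ellInfty // ‖g‖ ≤ 1} :=
  TopologicalSpace.induced (fun g => (⇑g.1 : ℕ → ℝ)) Pi.topologicalSpace


/-- Build an element of `ℓ∞` from a bounded sequence. -/
def mkSeq (f : ℕ → ℝ) (C : ℝ) (h : ∀ k, |f k| ≤ C) : ellInfty :=
  BoundedContinuousFunction.ofNormedAddCommGroup f continuous_of_discreteTopology C
    (by simpa using h)

@[simp] lemma mkSeq_apply (f : ℕ → ℝ) (C : ℝ) (h : ∀ k, |f k| ≤ C) (k : ℕ) :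
    mkSeq f C h k = f k := rfl

/-- The indicator sequence of `{j}`. -/
def ind (j : ℕ) : ellInfty :=
  mkSeq (fun k => if k = j then 1 else 0) 1 (by intro k; split <;> simp)

@[simp] lemma ind_apply (j k : ℕ) : ind j k = if k = j then (1:ℝ) else 0 := rfl

lemma sum_smul_ind (c : ℕ → ℝ) (n k : ℕ) :
    (∑ j ∈ Finset.range n, c j • ind j) k = if k < n then c k else 0 := by
  rw [BoundedContinuousFunction.coe_sum, Finset.sum_apply]
  simp only [BoundedContinuousFunction.coe_smul, Pi.smul_apply, ind_apply, smul_eq_mul,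
    mul_ite, mul_one, mul_zero]
  rw [Finset.sum_ite_eq (Finset.range n) k c]
  simp

lemma abs_apply_le (f : ellInfty) (k : ℕ) : |f k| ≤ ‖f‖ :=
  f.norm_coe_le_norm k

/-- truncation of a sequence -/
def truncSeq (f : ellInfty) (N : ℕ) : ellInfty :=
  mkSeq (fun k => if k < N then f k else 0) ‖f‖
    (by intro k
        split
        · exact abs_apply_le f k
        · simpa using norm_nonneg f)

lemma truncSeq_norm_le (f : ellInfty) (N : ℕ) : ‖truncSeq f N‖ ≤ ‖f‖ := by
  refine (BoundedContinuousFunction.norm_le (norm_nonneg f)).2 fun k => ?_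
  show |(truncSeq f N) k| ≤ ‖f‖
  simp only [truncSeq, mkSeq_apply]
  split
  · exact abs_apply_le f k
  · simpa using norm_nonneg f

lemma truncSeq_eq_sum (f : ellInfty) (N : ℕ) :
    truncSeq f N = ∑ j ∈ Finset.range N, f j • ind j := by
  ext k
  rw [sum_smul_ind]
  rfl

lemma ind_mem_czero (j : ℕ) : ind j ∈ czero := by
  show Tendsto _ atTop (𝓝 (0:ℝ))
  refine tendsto_atTop_of_eventually_const (i₀ := j + 1) fun k hk => ?_
  simp only [ind_apply, if_neg (by omega : ¬ k = j)]


lemma abs_tsum_le' (a : ℕ → ℝ) (h : Summable fun j => |a j|) : |∑' k, a k| ≤ ∑' k, |a k| := by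
  have h' : Summable fun j => ‖a j‖ := by simpa only [Real.norm_eq_abs] using h
  have := norm_tsum_le_tsum_norm h'
  simpa only [Real.norm_eq_abs] using this

lemma summable_tail (a : ℕ → ℝ) (h : Summable a) (N : ℕ) : Summable fun k => a (k + N) := by
  exact h.comp_injective (add_left_injective N)

set_option maxHeartbeats 1000000 in
lemma c0matrix_forward (R : ellInfty →L[ℝ] ellInfty) (b : ℕ → ℕ → ℝ) (hb : IsC0Matrix R b) :
    (∀ f ∈ czero, R f ∈ czero) ∧
      @Continuous _ _ ballPointwiseTopology Pi.topologicalSpace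
        (fun g : {g : ellInfty // ‖g‖ ≤ 1} => (⇑(R g.1) : ℕ → ℝ)) := by
  obtain ⟨C, hC⟩ := hb.rows_bounded
  set C' : ℝ := max C 1 with hC'def
  have hC'pos : (0:ℝ) < C' := lt_of_lt_of_le one_pos (le_max_right _ _)
  have hCC' : ∀ i, (∑' j, |b i j|) ≤ C' := fun i => (hC i).trans (le_max_left _ _)
  have habs : ∀ (f : ellInfty) i, Summable fun j => |b i j * f j| := by
    intro f i
    refine Summable.of_nonneg_of_le (fun j => abs_nonneg _) (fun j => ?_)
      ((hb.rows_summable i).mul_right ‖f‖)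
    rw [abs_mul]
    exact mul_le_mul_of_nonneg_left (abs_apply_le f j) (abs_nonneg _)
  have hsum : ∀ (f : ellInfty) i, Summable fun j => b i j * f j := by
    intro f i
    exact (habs f i).of_abs
  constructor
  · -- preserves c₀
    intro f hf
    show Tendsto (⇑(R f)) atTop (𝓝 (0:ℝ))
    rw [Metric.tendsto_atTop]
    intro ε hε
    have hε2 : 0 < ε / 2 / C' := by positivity
    have hf' : Tendsto (⇑f) atTop (𝓝 (0:ℝ)) := hf
    obtain ⟨N, hN⟩ := (Metric.tendsto_atTop.1 hf') (ε / 2 / C') hε2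
    -- finite part tends to 0 in i
    have hfin : Tendsto (fun i => ∑ j ∈ Finset.range N, b i j * f j) atTop (𝓝 (0:ℝ)) := by
      have : Tendsto (fun i => ∑ j ∈ Finset.range N, b i j * f j) atTop
          (𝓝 (∑ j ∈ Finset.range N, (0:ℝ) * f j)) :=
        tendsto_finset_sum _ fun j _ => (hb.cols_vanish j).mul_const (f j)
      simpa using this
    obtain ⟨I, hI⟩ := (Metric.tendsto_atTop.1 hfin) (ε / 2) (by positivity)
    refine ⟨I, fun i hi => ?_⟩
    rw [Real.dist_eq, sub_zero]
    have hrepr := hb.matrix_repr f i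
    have hsplit := (hsum f i).sum_add_tsum_nat_add (f := fun j => b i j * f j) N
    have htail : |∑' k, b i (k + N) * f (k + N)| ≤ ε / 2 := by
      have h1 : |∑' k, b i (k + N) * f (k + N)| ≤ ∑' k, |b i (k + N) * f (k + N)| :=
        abs_tsum_le' _ (summable_tail _ (habs f i) N)
      have h2 : (∑' k, |b i (k + N) * f (k + N)|) ≤ ∑' k, |b i (k + N)| * (ε / 2 / C') := by
        refine Summable.tsum_le_tsum (fun k => ?_) (summable_tail _ (habs f i) N)
          ((summable_tail _ (hb.rows_summable i) N).mul_right _)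
        rw [abs_mul]
        refine mul_le_mul_of_nonneg_left ?_ (abs_nonneg _)
        have := hN (k + N) (Nat.le_add_left N k)
        rw [Real.dist_eq, sub_zero] at this
        exact this.le
      have h3 : (∑' k, |b i (k + N)| * (ε / 2 / C')) = (∑' k, |b i (k + N)|) * (ε / 2 / C') :=
        tsum_mul_right
      have h4 : (∑' k, |b i (k + N)|) ≤ C' := by
        have hsplit' := (hb.rows_summable i).sum_add_tsum_nat_add (f := fun j => |b i j|) N
        have : (∑' k, |b i (k + N)|) = (∑' j, |b i j|) - ∑ j ∈ Finset.range N, |b i j| := by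
          linarith [hsplit']
        rw [this]
        have : (0:ℝ) ≤ ∑ j ∈ Finset.range N, |b i j| :=
          Finset.sum_nonneg fun j _ => abs_nonneg _
        linarith [hCC' i]
      calc |∑' k, b i (k + N) * f (k + N)| ≤ (∑' k, |b i (k + N)|) * (ε / 2 / C') := by
            rw [← h3]; exact h1.trans h2
        _ ≤ C' * (ε / 2 / C') := by
            refine mul_le_mul_of_nonneg_right h4 (by positivity)
        _ = ε / 2 := by field_simp
    have hfinlt : |∑ j ∈ Finset.range N, b i j * f j| < ε / 2 := by
      have := hI i hi
      rwa [Real.dist_eq, sub_zero] at this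
    calc |R f i| = |∑ j ∈ Finset.range N, b i j * f j + ∑' k, b i (k + N) * f (k + N)| := by
          rw [hrepr, hsplit]
      _ ≤ |∑ j ∈ Finset.range N, b i j * f j| + |∑' k, b i (k + N) * f (k + N)| :=
          abs_add_le _ _
      _ < ε / 2 + ε / 2 := by linarith
      _ = ε := by ring
  · -- continuity on the ball
    letI : TopologicalSpace {g : ellInfty // ‖g‖ ≤ 1} := ballPointwiseTopology
    refine continuous_pi fun i => ?_
    have hcont : ∀ N : ℕ, Continuous
        (fun g : {g : ellInfty // ‖g‖ ≤ 1} => ∑ j ∈ Finset.range N, b i j * g.1 j) := by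
      intro N
      refine continuous_finset_sum _ fun j _ => ?_
      exact continuous_const.mul ((continuous_apply j).comp continuous_induced_dom)
    have hTU : TendstoUniformly
        (fun N (g : {g : ellInfty // ‖g‖ ≤ 1}) => ∑ j ∈ Finset.range N, b i j * g.1 j)
        (fun g => R g.1 i) atTop := by
      rw [Metric.tendstoUniformly_iff]
      intro ε hε
      have hT : Tendsto (fun N => ∑' k, |b i (k + N)|) atTop (𝓝 (0:ℝ)) := by
        have h1 := (hb.rows_summable i).hasSum.tendsto_sum_nat
        have h2 : Tendsto (fun N => (∑' j, |b i j|) - ∑ j ∈ Finset.range N, |b i j|)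
            atTop (𝓝 ((∑' j, |b i j|) - (∑' j, |b i j|))) := tendsto_const_nhds.sub h1
        rw [sub_self] at h2
        refine h2.congr fun N => ?_
        have := (hb.rows_summable i).sum_add_tsum_nat_add (f := fun j => |b i j|) N
        linarith
      filter_upwards [hT.eventually (gt_mem_nhds hε)] with N hN g
      rw [Real.dist_eq]
      have hsplit := (hsum g.1 i).sum_add_tsum_nat_add (f := fun j => b i j * g.1 j) N
      have : R g.1 i - ∑ j ∈ Finset.range N, b i j * g.1 j = ∑' k, b i (k + N) * g.1 (k + N) := by
        rw [hb.matrix_repr g.1 i, ← hsplit]; ring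
      rw [this]
      have hgb : ∀ k, |b i (k + N) * g.1 (k + N)| ≤ |b i (k + N)| := by
        intro k
        rw [abs_mul]
        calc |b i (k + N)| * |g.1 (k + N)| ≤ |b i (k + N)| * 1 :=
              mul_le_mul_of_nonneg_left ((abs_apply_le g.1 _).trans g.2) (abs_nonneg _)
          _ = |b i (k + N)| := mul_one _
      calc |∑' k, b i (k + N) * g.1 (k + N)| ≤ ∑' k, |b i (k + N) * g.1 (k + N)| :=
            abs_tsum_le' _ (summable_tail _ (habs g.1 i) N)
        _ ≤ ∑' k, |b i (k + N)| :=
            Summable.tsum_le_tsum hgb (summable_tail _ (habs g.1 i) N)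
              (summable_tail _ (hb.rows_summable i) N)
        _ < ε := hN
    exact hTU.continuous (Frequently.of_forall hcont)

set_option maxHeartbeats 1000000 in
lemma c0matrix_backward (R : ellInfty →L[ℝ] ellInfty)
    (h1 : ∀ f ∈ czero, R f ∈ czero)
    (h2 : @Continuous _ _ ballPointwiseTopology Pi.topologicalSpace
      (fun g : {g : ellInfty // ‖g‖ ≤ 1} => (⇑(R g.1) : ℕ → ℝ))) :
    ∃ b : ℕ → ℕ → ℝ, IsC0Matrix R b := by
  letI : TopologicalSpace {g : ellInfty // ‖g‖ ≤ 1} := ballPointwiseTopology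
  set b : ℕ → ℕ → ℝ := fun i j => R (ind j) i with hbdef
  -- row partial sums are bounded by ‖R‖
  have hrow : ∀ i n, (∑ j ∈ Finset.range n, |b i j|) ≤ ‖R‖ := by
    intro i n
    set g : ellInfty := ∑ j ∈ Finset.range n, (if b i j < 0 then (-1:ℝ) else 1) • ind j with hgdef
    have hgk : ∀ k, g k = if k < n then (if b i k < 0 then (-1:ℝ) else 1) else 0 := by
      intro k; rw [hgdef, sum_smul_ind]
    have hgnorm : ‖g‖ ≤ 1 := by
      refine (BoundedContinuousFunction.norm_le zero_le_one).2 fun k => ?_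
      rw [Real.norm_eq_abs, hgk k]
      split
      · split <;> norm_num
      · norm_num
    have hRg : R g i = ∑ j ∈ Finset.range n, |b i j| := by
      rw [hgdef, map_sum]
      rw [BoundedContinuousFunction.coe_sum, Finset.sum_apply]
      refine Finset.sum_congr rfl fun j _ => ?_
      rw [map_smul]
      show ((if b i j < 0 then (-1:ℝ) else 1) • (R (ind j))) i = |b i j|
      simp only [BoundedContinuousFunction.coe_smul, Pi.smul_apply, smul_eq_mul]
      split
      · rw [abs_of_neg ‹_›]; ring
      · rw [abs_of_nonneg (not_lt.1 ‹_›)]; ring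
    calc (∑ j ∈ Finset.range n, |b i j|) = R g i := hRg.symm
      _ ≤ |R g i| := le_abs_self _
      _ ≤ ‖R g‖ := abs_apply_le _ i
      _ ≤ ‖R‖ * ‖g‖ := R.le_opNorm g
      _ ≤ ‖R‖ * 1 := mul_le_mul_of_nonneg_left hgnorm (norm_nonneg R)
      _ = ‖R‖ := mul_one _
  have hrs : ∀ i, Summable fun j => |b i j| := fun i =>
    summable_of_sum_range_le (fun j => abs_nonneg _) (hrow i)
  have hsum : ∀ (f : ellInfty) i, Summable fun j => b i j * f j := by
    intro f i
    refine Summable.of_abs (Summable.of_nonneg_of_le (fun j => abs_nonneg _)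
      (fun j => ?_) ((hrs i).mul_right ‖f‖))
    rw [abs_mul]
    exact mul_le_mul_of_nonneg_left (abs_apply_le f j) (abs_nonneg _)
  -- partial sums representation via pointwise continuity, for f in the ball
  have hball : ∀ (f : ellInfty), ‖f‖ ≤ 1 → ∀ i, R f i = ∑' j, b i j * f j := by
    intro f hf i
    have htrunc : ∀ N, ‖truncSeq f N‖ ≤ 1 := fun N => (truncSeq_norm_le f N).trans hf
    set u : ℕ → {g : ellInfty // ‖g‖ ≤ 1} := fun N => ⟨truncSeq f N, htrunc N⟩ with hudef
    have hu : Tendsto u atTop (𝓝 (⟨f, hf⟩ : {g : ellInfty // ‖g‖ ≤ 1})) := by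
      show Tendsto u atTop (@nhds _ ballPointwiseTopology _)
      rw [ballPointwiseTopology]
      rw [nhds_induced, tendsto_comap_iff]
      rw [tendsto_pi_nhds]
      intro k
      refine tendsto_atTop_of_eventually_const (i₀ := k + 1) fun N hN => ?_
      show (truncSeq f N) k = f k
      simp only [truncSeq, mkSeq_apply, if_pos (by omega : k < N)]
    have hRu : Tendsto (fun N => (⇑(R (u N).1) : ℕ → ℝ)) atTop (𝓝 (⇑(R f) : ℕ → ℝ)) :=
      (h2.tendsto _).comp hu
    have hRi : Tendsto (fun N => R (truncSeq f N) i) atTop (𝓝 (R f i)) :=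
      (tendsto_pi_nhds.1 hRu) i
    have hps : ∀ N, R (truncSeq f N) i = ∑ j ∈ Finset.range N, b i j * f j := by
      intro N
      rw [truncSeq_eq_sum, map_sum, BoundedContinuousFunction.coe_sum, Finset.sum_apply]
      refine Finset.sum_congr rfl fun j _ => ?_
      rw [map_smul]
      show (f j • (R (ind j))) i = b i j * f j
      simp only [BoundedContinuousFunction.coe_smul, Pi.smul_apply, smul_eq_mul]
      ring
    have hlim : Tendsto (fun N => ∑ j ∈ Finset.range N, b i j * f j) atTop (𝓝 (R f i)) := by
      refine hRi.congr fun N => hps N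
    exact tendsto_nhds_unique hlim ((hsum f i).hasSum.tendsto_sum_nat)
  refine ⟨b, ?_, ⟨‖R‖, fun i => (hrs i).tsum_le_of_sum_range_le (hrow i)⟩, ?_, ?_⟩
  · exact hrs
  · intro j
    exact h1 (ind j) (ind_mem_czero j)
  · intro f i
    rcases eq_or_ne f 0 with rfl | hf0
    · simp
    · set c : ℝ := ‖f‖ with hcdef
      have hc : 0 < c := norm_pos_iff.2 hf0
      set g : ellInfty := c⁻¹ • f with hgdef
      have hgnorm : ‖g‖ ≤ 1 := by
        refine (BoundedContinuousFunction.norm_le zero_le_one).2 fun k => ?_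
        rw [hgdef]
        show ‖(c⁻¹ • f) k‖ ≤ 1
        simp only [BoundedContinuousFunction.coe_smul, Pi.smul_apply, smul_eq_mul,
          Real.norm_eq_abs, abs_mul, abs_of_pos (inv_pos.2 hc)]
        calc c⁻¹ * |f k| ≤ c⁻¹ * c :=
              mul_le_mul_of_nonneg_left (abs_apply_le f k) (inv_pos.2 hc).le
          _ = 1 := inv_mul_cancel₀ hc.ne' 
      have hfg : f = c • g := by
        rw [hgdef, smul_smul, mul_inv_cancel₀ hc.ne', one_smul]
      have hg := hball g hgnorm i
      calc R f i = (R (c • g)) i := by rw [← hfg]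
        _ = c * R g i := by
            rw [map_smul]
            show (c • (R g)) i = c * R g i
            simp only [BoundedContinuousFunction.coe_smul, Pi.smul_apply, smul_eq_mul]
        _ = c * ∑' j, b i j * g j := by rw [hg]
        _ = ∑' j, c * (b i j * g j) := tsum_mul_left.symm
        _ = ∑' j, b i j * f j := by
            refine tsum_congr fun j => ?_
            rw [hfg]
            show c * (b i j * g j) = b i j * (c • g) j
            simp only [BoundedContinuousFunction.coe_smul, Pi.smul_apply, smul_eq_mul]
            ring

/-- A bounded operator `R : ℓ∞ → ℓ∞` is given by a `c₀`-matrix iff it preserves `c₀` and its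
restriction to the closed unit ball is continuous from the topology of pointwise convergence
on the ball to the topology of pointwise convergence on `ℓ∞` (viewed inside `ℝ^ℕ`). -/
theorem statement4 (R : ellInfty →L[ℝ] ellInfty) :
    (∃ b : ℕ → ℕ → ℝ, IsC0Matrix R b) ↔
      ((∀ f ∈ czero, R f ∈ czero) ∧
        @Continuous _ _ ballPointwiseTopology Pi.topologicalSpace
          (fun g : {g : ellInfty // ‖g‖ ≤ 1} => (⇑(R g.1) : ℕ → ℝ))) := by
  constructor
  · rintro ⟨b, hb⟩
    exact c0matrix_forward R b hb
  · rintro ⟨h1, h2⟩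
    exact c0matrix_backward R h1 h2
end
end

section
/- If a bounded linear operator T : ℓ∞/c₀ → ℓ∞/c₀ factors through ℓ∞, i.e., T = R₂ ∘ R₁ for some bounded linear operators R₁ : ℓ∞/c₀ → ℓ∞ and R₂ : ℓ∞ → ℓ∞/c₀, then T is locally null. -/
open Filter Topology

noncomputable section

/-- The quotient Banach space `ℓ∞/c₀`; `czero.mkQ : ℓ∞ → ℓ∞/c₀` is the quotient map. -/
abbrev ellInftyModCzero : Type := ellInfty ⧸ czero

/-- A bounded operator `T` on `ℓ∞/c₀` is *locally null* if for every infinite `A ⊆ ℕ`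
there is an infinite `A₁ ⊆ A` such that `T (Q f) = 0` for every `f ∈ ℓ∞` vanishing
outside of `A₁`. -/
def LocallyNull (T : ellInftyModCzero →L[ℝ] ellInftyModCzero) : Prop :=
  ∀ A : Set ℕ, A.Infinite → ∃ A₁ ⊆ A, A₁.Infinite ∧
    ∀ f : ellInfty, (∀ n ∉ A₁, f n = 0) → T (czero.mkQ f) = 0

open scoped Classical

lemma mem_czero' {f : ellInfty} (h : Tendsto (⇑f) atTop (𝓝 (0:ℝ))) : f ∈ czero := h

/-- If `g` is bounded by `1` off a finite set, its image in the quotient has norm at most 1. -/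
lemma normQ_le_one (g : ellInfty) (F : Set ℕ) (hF : F.Finite)
    (hb : ∀ n ∉ F, |g n| ≤ 1) : ‖czero.mkQ g‖ ≤ 1 := by
  set h : ellInfty := BoundedContinuousFunction.ofNormedAddCommGroup
    (fun n => if n ∈ F then 0 else g n) (continuous_of_discreteTopology) 1
    (by
      intro n
      by_cases hn : n ∈ F
      · simp [hn]
      · simpa [hn, Real.norm_eq_abs] using hb n hn) with hdef
  have hcoe : ∀ n, h n = if n ∈ F then 0 else g n := fun n => rfl
  have hnorm : ‖h‖ ≤ 1 :=
    BoundedContinuousFunction.norm_ofNormedAddCommGroup_le _ zero_le_one _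
  have hmem : g - h ∈ czero := by
    apply mem_czero'
    have hev : ∀ᶠ n in atTop, (⇑(g - h)) n = (0:ℝ) := by
      have := hF.eventually_cofinite_notMem
      rw [Nat.cofinite_eq_atTop] at this
      filter_upwards [this] with n hn
      simp [hcoe n, hn]
    exact tendsto_const_nhds.congr' (by filter_upwards [hev] with n hn using hn.symm)
  have heq : czero.mkQ g = czero.mkQ h := by
    rw [Submodule.mkQ_apply, Submodule.mkQ_apply]
    exact (Submodule.Quotient.eq czero).mpr hmem
  rw [heq, Submodule.mkQ_apply]
  exact le_trans (Submodule.Quotient.norm_mk_le czero h) hnorm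

/-- Prefix coding: `pre r n` encodes the first `n` values of `r`. -/
def pre (r : ℕ → Bool) (n : ℕ) : ℕ := Encodable.encode (List.ofFn fun i : Fin n => r i)

lemma pre_injective (r : ℕ → Bool) : Function.Injective (pre r) := by
  intro n m h
  have := Encodable.encode_injective h
  have hlen := congrArg List.length this
  simpa using hlen

/-- The almost disjoint family of branches of the binary tree. -/
def ADfam (r : ℕ → Bool) : Set ℕ := Set.range (pre r)

lemma ADfam_infinite (r : ℕ → Bool) : (ADfam r).Infinite :=
  Set.infinite_range_of_injective (pre_injective r)

lemma ADfam_inter_finite {r r' : ℕ → Bool} (h : r ≠ r') :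
    (ADfam r ∩ ADfam r').Finite := by
  obtain ⟨k, hk⟩ := Function.ne_iff.mp h
  have hsub : ADfam r ∩ ADfam r' ⊆ pre r '' (Set.Iic k) := by
    rintro x ⟨⟨n, rfl⟩, ⟨n', hn'⟩⟩
    have hlist : (List.ofFn fun i : Fin n' => r' i) = (List.ofFn fun i : Fin n => r i) :=
      Encodable.encode_injective hn'
    have hlen : n' = n := by simpa using congrArg List.length hlist
    subst hlen
    have hent : ∀ i : Fin n', r' i = r i := by
      intro i
      have h2 := List.ofFn_inj.mp hlist
      exact congrFun h2 i
    refine ⟨n', ?_, rfl⟩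
    by_contra hnk
    simp only [Set.mem_Iic, not_le] at hnk
    exact hk (hent ⟨k, hnk⟩).symm
  exact ((Set.finite_Iic k).image _).subset hsub

/-- Rosenthal-type counting: given an almost disjoint family `B` and a bounded functional `φ`
on `ℓ∞/c₀`, only finitely many branches carry a normalized vector with `φ`-value above `1/(m+1)`. -/
lemma finite_bad (φ : ellInftyModCzero →L[ℝ] ℝ) (C : ℝ)
    (hC : ∀ x : ellInftyModCzero, ‖φ x‖ ≤ C * ‖x‖) (hC0 : 0 ≤ C)
    (B : (ℕ → Bool) → Set ℕ)
    (hAD : ∀ r r', r ≠ r' → (B r ∩ B r').Finite) (m : ℕ) :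
    {r | ∃ f : ellInfty, (∀ n ∉ B r, f n = 0) ∧ ‖f‖ ≤ 1 ∧
      1/(m+1 : ℝ) < φ (czero.mkQ f)}.Finite := by
  set D := {r | ∃ f : ellInfty, (∀ n ∉ B r, f n = 0) ∧ ‖f‖ ≤ 1 ∧
      1/(m+1 : ℝ) < φ (czero.mkQ f)} with hD
  by_contra hinf
  rw [← Set.Infinite] at hinf
  set N : ℕ := ⌈(m+1 : ℝ) * C⌉₊ + 1 with hN
  obtain ⟨s, hsD, hscard⟩ := hinf.exists_subset_card_eq N
  have hchoice : ∀ r ∈ s, ∃ f : ellInfty, (∀ n ∉ B r, f n = 0) ∧ ‖f‖ ≤ 1 ∧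
      1/(m+1 : ℝ) < φ (czero.mkQ f) := fun r hr => hsD hr
  choose f hf0 hf1 hf2 using hchoice
  set g : ellInfty := ∑ r ∈ s.attach, f r.1 r.2 with hg
  set F : Set ℕ := ⋃ (r ∈ s) (r' ∈ s) (_ : r ≠ r'), B r ∩ B r' with hF
  have hFfin : F.Finite := by
    apply Set.Finite.biUnion s.finite_toSet
    intro r _
    apply Set.Finite.biUnion s.finite_toSet
    intro r' _
    by_cases h : r = r'
    · simp [h]
    · simpa [h] using hAD r r' h
  have hgb : ∀ n ∉ F, |g n| ≤ 1 := by
    intro n hn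
    have hsum : g n = ∑ r ∈ s.attach, f r.1 r.2 n := by
      rw [hg]
      simp
    by_cases hex : ∃ r₀ : {x // x ∈ s}, n ∈ B r₀.1
    · obtain ⟨r₀, hr₀⟩ := hex
      have : ∑ r ∈ s.attach, f r.1 r.2 n = f r₀.1 r₀.2 n := by
        apply Finset.sum_eq_single_of_mem r₀ (Finset.mem_attach _ _)
        intro r _ hrr
        apply hf0
        intro hnB
        apply hn
        rw [hF]
        refine Set.mem_iUnion.mpr ⟨r.1, Set.mem_iUnion.mpr ⟨r.2, Set.mem_iUnion.mpr ⟨r₀.1,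
          Set.mem_iUnion.mpr ⟨r₀.2, Set.mem_iUnion.mpr ⟨?_, hnB, hr₀⟩⟩⟩⟩⟩
        intro h
        exact hrr (Subtype.ext h)
      rw [hsum, this]
      calc |f r₀.1 r₀.2 n| ≤ ‖f r₀.1 r₀.2‖ := by
            simpa [Real.norm_eq_abs] using
              BoundedContinuousFunction.norm_coe_le_norm (f r₀.1 r₀.2) n
        _ ≤ 1 := hf1 _ _
    · push_neg at hex
      have : ∑ r ∈ s.attach, f r.1 r.2 n = 0 :=
        Finset.sum_eq_zero fun r _ => hf0 r.1 r.2 n (hex r)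
      rw [hsum, this]; simp
  have hQg : ‖czero.mkQ g‖ ≤ 1 := normQ_le_one g F hFfin hgb
  have hsumφ : φ (czero.mkQ g) = ∑ r ∈ s.attach, φ (czero.mkQ (f r.1 r.2)) := by
    rw [hg, map_sum, map_sum]
  have hne : s.attach.Nonempty := by
    rw [← Finset.card_pos, Finset.card_attach, hscard]; omega
  have hlow : (N : ℝ) * (1/(m+1 : ℝ)) < φ (czero.mkQ g) := by
    rw [hsumφ]
    calc (N : ℝ) * (1/(m+1 : ℝ)) = ∑ _r ∈ s.attach, (1/(m+1:ℝ)) := by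
          rw [Finset.sum_const, Finset.card_attach, hscard, nsmul_eq_mul]
      _ < ∑ r ∈ s.attach, φ (czero.mkQ (f r.1 r.2)) :=
          Finset.sum_lt_sum_of_nonempty hne fun r _ => hf2 r.1 r.2
  have hup : φ (czero.mkQ g) ≤ C := by
    calc φ (czero.mkQ g) ≤ |φ (czero.mkQ g)| := le_abs_self _
      _ ≤ C * ‖czero.mkQ g‖ := by simpa [Real.norm_eq_abs] using hC (czero.mkQ g)
      _ ≤ C * 1 := mul_le_mul_of_nonneg_left hQg hC0
      _ = C := mul_one _
  have hNs : (m+1 : ℝ) * C < N := by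
    rw [hN]
    push_cast
    exact lt_of_le_of_lt (Nat.le_ceil _) (by norm_num)
  have hm1 : (0:ℝ) < m + 1 := by positivity
  have : C < (N : ℝ) * (1/(m+1:ℝ)) := by
    rw [mul_one_div, lt_div_iff₀ hm1]
    nlinarith [hNs]
  linarith

/-- For a bounded functional on `ℓ∞/c₀`, the set of branches supporting a vector with nonzero
`φ`-value is countable. -/
lemma countable_bad (φ : ellInftyModCzero →L[ℝ] ℝ)
    (B : (ℕ → Bool) → Set ℕ)
    (hAD : ∀ r r', r ≠ r' → (B r ∩ B r').Finite) :
    {r | ∃ f : ellInfty, (∀ n ∉ B r, f n = 0) ∧ φ (czero.mkQ f) ≠ 0}.Countable := by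
  obtain ⟨C, hC0, hC⟩ :=
    ContinuousLinearMap.bound (E := ellInftyModCzero) (F := ℝ) (σ₁₂ := RingHom.id ℝ) φ
  have hsub : {r | ∃ f : ellInfty, (∀ n ∉ B r, f n = 0) ∧ φ (czero.mkQ f) ≠ 0} ⊆
      ⋃ m : ℕ, {r | ∃ f : ellInfty, (∀ n ∉ B r, f n = 0) ∧ ‖f‖ ≤ 1 ∧
        1/(m+1 : ℝ) < φ (czero.mkQ f)} := by
    rintro r ⟨f, hsupp, hne⟩
    have hf0 : f ≠ 0 := by
      rintro rfl
      simp at hne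
    have hfnorm : (0:ℝ) < ‖f‖ := norm_pos_iff.mpr hf0
    -- normalize and fix the sign
    set a : ℝ := φ (czero.mkQ f) with ha
    set c : ℝ := if 0 < a then 1/‖f‖ else -(1/‖f‖) with hc
    set f' : ellInfty := c • f with hf'
    have hsupp' : ∀ n ∉ B r, f' n = 0 := by
      intro n hn
      simp [hf', hsupp n hn]
    have hcn : ‖c‖ = 1/‖f‖ := by
      rw [hc, Real.norm_eq_abs]
      split <;> simp [abs_of_pos (one_div_pos.mpr hfnorm)]
    have hnorm' : ‖f'‖ ≤ 1 := by
      calc ‖f'‖ ≤ ‖c‖ * ‖f‖ := by rw [hf']; exact norm_smul_le c f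
        _ = 1 := by rw [hcn]; field_simp
    have hval : φ (czero.mkQ f') = |a| / ‖f‖ := by
      have : czero.mkQ f' = c • czero.mkQ f := by
        rw [hf', map_smul]
      rw [this, map_smul, smul_eq_mul, ← ha, hc]
      rcases lt_trichotomy 0 a with h | h | h
      · rw [if_pos h, abs_of_pos h]; ring
      · exact absurd h.symm hne
      · rw [if_neg (by linarith), abs_of_neg h]; ring
    have hpos : 0 < |a| / ‖f‖ := div_pos (abs_pos.mpr hne) hfnorm
    obtain ⟨m, hm⟩ := exists_nat_one_div_lt hpos
    refine Set.mem_iUnion.mpr ⟨m, f', hsupp', hnorm', ?_⟩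
    rw [hval]
    exact_mod_cast hm
  exact Set.Countable.mono hsub
    (Set.countable_iUnion fun m => (finite_bad φ C hC hC0.le B hAD m).countable)

lemma not_countable_boolseq : ¬ (Set.univ : Set (ℕ → Bool)).Countable := by
  intro h
  have hcnt : Countable (ℕ → Bool) := Set.countable_univ_iff.mp h
  obtain ⟨g, hg⟩ := (@countable_iff_exists_injective (ℕ → Bool)).mp hcnt
  have hj : Function.Injective fun s : Set ℕ => g (fun n => decide (n ∈ s)) := by
    intro s s' hss
    have := hg hss
    ext n
    have := congrFun this n
    simpa using this
  exact Function.cantor_injective _ hj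

/-- Simultaneous choice of a good branch for countably many functionals. -/
lemma exists_good (φ : ℕ → (ellInftyModCzero →L[ℝ] ℝ))
    (B : (ℕ → Bool) → Set ℕ)
    (hAD : ∀ r r', r ≠ r' → (B r ∩ B r').Finite) :
    ∃ r, ∀ (k : ℕ) (f : ellInfty), (∀ n ∉ B r, f n = 0) → φ k (czero.mkQ f) = 0 := by
  set Bad : Set (ℕ → Bool) :=
    ⋃ k : ℕ, {r | ∃ f : ellInfty, (∀ n ∉ B r, f n = 0) ∧ φ k (czero.mkQ f) ≠ 0} with hBad
  have hcnt : Bad.Countable := Set.countable_iUnion fun k => countable_bad (φ k) B hAD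
  have : ∃ r, r ∉ Bad := by
    by_contra hall
    push_neg at hall
    exact not_countable_boolseq (hcnt.mono fun r _ => hall r)
  obtain ⟨r, hr⟩ := this
  refine ⟨r, fun k f hsupp => ?_⟩
  by_contra hne
  exact hr (Set.mem_iUnion.mpr ⟨k, f, hsupp, hne⟩)

/-- Every bounded operator on `ℓ∞/c₀` which factors through `ℓ∞` is locally null. -/
theorem statement7 (T : ellInftyModCzero →L[ℝ] ellInftyModCzero)
    (h : ∃ (R₁ : ellInftyModCzero →L[ℝ] ellInfty) (R₂ : ellInfty →L[ℝ] ellInftyModCzero),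
      T = R₂.comp R₁) :
    LocallyNull T := by
  obtain ⟨R₁, R₂, rfl⟩ := h
  intro A hA
  set e : ℕ ↪ A := Set.Infinite.natEmbedding A hA with he
  set emb : ℕ → ℕ := fun n => (e n : ℕ) with hemb
  have hembinj : Function.Injective emb := fun n m hnm => e.injective (Subtype.ext hnm)
  have hembmem : ∀ n, emb n ∈ A := fun n => (e n).2
  set B : (ℕ → Bool) → Set ℕ := fun r => emb '' ADfam r with hB
  have hAD : ∀ r r', r ≠ r' → (B r ∩ B r').Finite := by
    intro r r' hrr
    rw [hB]
    simp only
    rw [← Set.image_inter hembinj]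
    exact (ADfam_inter_finite hrr).image _
  set φ : ℕ → (ellInftyModCzero →L[ℝ] ℝ) :=
    fun k => (BoundedContinuousFunction.evalCLM ℝ k).comp R₁ with hφ
  obtain ⟨r, hr⟩ := exists_good φ B hAD
  refine ⟨B r, ?_, ?_, ?_⟩
  · rintro x ⟨n, _, rfl⟩
    exact hembmem n
  · exact ((ADfam_infinite r).image hembinj.injOn)
  · intro f hsupp
    have hR₁ : R₁ (czero.mkQ f) = 0 := by
      ext k
      have := hr k f hsupp
      simpa [hφ, BoundedContinuousFunction.evalCLM_apply] using this
    rw [ContinuousLinearMap.comp_apply, hR₁, map_zero]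
end
end

section
/- Let T : C(ℕ*) → C(ℕ*) be a bounded linear operator and let B ⊆ ℕ be infinite. Then there exist an infinite B₁ ⊆ B and a real number s ≥ 0 such that for every y ∈ B₁*, the operator norm of the continuous linear functional C(ℕ*) → ℝ given by f ↦ (T f)(y) equals s. -/
open Filter Topology

noncomputable section

/-- The underlying set of the Stone–Čech remainder `ℕ* = βℕ \ ℕ`: the nonprincipal
ultrafilters in the space `Ultrafilter ℕ`, which is the Stone–Čech compactification of the
discrete space `ℕ` (with `pure : ℕ → Ultrafilter ℕ` the canonical embedding). -/
def nstarSet : Set (Ultrafilter ℕ) := {u | ∀ n : ℕ, u ≠ pure n}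

/-- The Stone–Čech remainder `ℕ* = βℕ \ ℕ` as a topological space. -/
abbrev NStar : Type := ↥nstarSet

lemma isOpen_principal_ultrafilters :
    IsOpen {u : Ultrafilter ℕ | ∃ n : ℕ, u = pure n} := by
  have heq : {u : Ultrafilter ℕ | ∃ n : ℕ, u = pure n} =
      ⋃ n : ℕ, {u : Ultrafilter ℕ | ({n} : Set ℕ) ∈ u} := by
    ext u
    simp only [Set.mem_setOf_eq, Set.mem_iUnion]
    constructor
    · rintro ⟨n, rfl⟩
      exact ⟨n, by simp⟩
    · rintro ⟨n, hn⟩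
      obtain ⟨x, hx, hux⟩ := Ultrafilter.eq_pure_of_finite_mem (Set.finite_singleton n) hn
      exact ⟨x, hux⟩
  rw [heq]
  exact isOpen_iUnion fun n => ultrafilter_isOpen_basic _
lemma isClosed_nstarSet : IsClosed nstarSet := by
  have : nstarSet = {u : Ultrafilter ℕ | ∃ n : ℕ, u = pure n}ᶜ := by
    ext u
    simp [nstarSet, not_exists]
  rw [this]
  exact isOpen_principal_ultrafilters.isClosed_compl

instance : CompactSpace NStar :=
  isCompact_iff_compactSpace.mp (isClosed_nstarSet.isCompact)


/-- For an infinite `B₁ ⊆ ℕ`, the set `B₁*` of points of `ℕ*` lying in the closure (in `βℕ`,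
i.e. in `Ultrafilter ℕ`) of the image of `B₁`. -/
def starSet (B₁ : Set ℕ) : Set NStar :=
  {y : NStar | (y : Ultrafilter ℕ) ∈ closure ((pure : ℕ → Ultrafilter ℕ) '' B₁)}

namespace Statement18Aux

/-- Membership in `X*` is the same as `X` belonging to the ultrafilter. -/
lemma mem_starSet_iff {X : Set ℕ} {y : NStar} :
    y ∈ starSet X ↔ X ∈ (y : Ultrafilter ℕ) := by
  constructor
  · intro h
    have hclosed : IsClosed {u : Ultrafilter ℕ | X ∈ u} := ultrafilter_isClosed_basic X
    have hsub : (pure : ℕ → Ultrafilter ℕ) '' X ⊆ {u : Ultrafilter ℕ | X ∈ u} := by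
      rintro _ ⟨n, hn, rfl⟩
      simpa using hn
    exact hclosed.closure_subset_iff.mpr hsub h
  · intro hX
    show (y : Ultrafilter ℕ) ∈ closure ((pure : ℕ → Ultrafilter ℕ) '' X)
    rw [(ultrafilterBasis_is_basis (α := ℕ)).mem_closure_iff]
    rintro o ⟨C, rfl⟩ hyo
    have hmem : C ∩ X ∈ (y : Ultrafilter ℕ) := Filter.inter_mem hyo hX
    obtain ⟨n, hnC, hnX⟩ := Ultrafilter.nonempty_of_mem hmem
    exact ⟨pure n, by simpa using hnC, ⟨n, hnX, rfl⟩⟩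

/-- Every member of a nonprincipal ultrafilter is infinite. -/
lemma infinite_of_mem {X : Set ℕ} {y : NStar} (h : X ∈ (y : Ultrafilter ℕ)) : X.Infinite := by
  by_contra hfin
  rw [Set.not_infinite] at hfin
  obtain ⟨n, _, hn⟩ := Ultrafilter.eq_pure_of_finite_mem hfin h
  exact y.2 n hn

lemma mem_of_diff_finite {X Y : Set ℕ} {y : NStar} (hX : X ∈ (y : Ultrafilter ℕ))
    (h : (X \ Y).Finite) : Y ∈ (y : Ultrafilter ℕ) := by
  have h1 : (X \ Y)ᶜ ∈ (y : Ultrafilter ℕ) := by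
    rw [Ultrafilter.compl_mem_iff_notMem]
    intro hmem
    exact (infinite_of_mem hmem) h
  refine Filter.mem_of_superset (Filter.inter_mem hX h1) ?_
  intro n hn
  rcases hn with ⟨hnX, hn2⟩
  by_contra hnY
  exact hn2 ⟨hnX, hnY⟩

/-- The star set of an infinite set is nonempty. -/
lemma starSet_nonempty {X : Set ℕ} (hX : X.Infinite) : (starSet X).Nonempty := by
  have hne : (Filter.cofinite (α := ℕ) ⊓ Filter.principal X).NeBot := by
    rw [Filter.inf_principal_neBot_iff]
    intro U hU
    have : (X \ Uᶜ).Infinite := hX.diff hU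
    obtain ⟨n, hn⟩ := this.nonempty
    exact ⟨n, by simpa using hn.2, hn.1⟩
  let u := Ultrafilter.of (Filter.cofinite ⊓ Filter.principal X)
  have hle : (u : Filter ℕ) ≤ Filter.cofinite ⊓ Filter.principal X := Ultrafilter.of_le _
  have hXu : X ∈ u := Filter.le_def.mp hle X
    (Filter.mem_inf_of_right (Filter.mem_principal_self X))
  have hnp : ∀ n : ℕ, u ≠ pure n := by
    intro n hn
    have h1 : ({n}ᶜ : Set ℕ) ∈ u := Filter.le_def.mp hle _
      (Filter.mem_inf_of_left (by simp [Set.finite_singleton]))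
    rw [hn] at h1
    simp at h1
  refine ⟨⟨u, hnp⟩, ?_⟩
  exact mem_starSet_iff.mpr hXu

variable (T : C(NStar, ℝ) →L[ℝ] C(NStar, ℝ))

/-- The norm of the functional `f ↦ (T f)(y)`. -/
abbrev phi (y : NStar) : ℝ := ‖(ContinuousMap.evalCLM ℝ y).comp T‖

lemma phi_nonneg (y : NStar) : 0 ≤ phi T y :=
  norm_nonneg ((ContinuousMap.evalCLM ℝ y).comp T)

lemma phi_le (y : NStar) : phi T y ≤ ‖T‖ := by
  have h1 : ‖(ContinuousMap.evalCLM ℝ y : C(NStar, ℝ) →L[ℝ] ℝ)‖ ≤ 1 := by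
    refine ContinuousLinearMap.opNorm_le_bound _ zero_le_one (fun f => ?_)
    simpa using f.norm_coe_le_norm y
  calc phi T y ≤ ‖(ContinuousMap.evalCLM ℝ y : C(NStar, ℝ) →L[ℝ] ℝ)‖ * ‖T‖ :=
        ContinuousLinearMap.opNorm_comp_le _ _
    _ ≤ 1 * ‖T‖ := mul_le_mul_of_nonneg_right h1 (norm_nonneg T)
    _ = ‖T‖ := one_mul _

lemma abs_le_phi (y : NStar) {f : C(NStar, ℝ)} (hf : ‖f‖ ≤ 1) : ‖(T f) y‖ ≤ phi T y := by
  have : ‖((ContinuousMap.evalCLM ℝ y).comp T) f‖ ≤ phi T y * ‖f‖ :=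
    ContinuousLinearMap.le_opNorm _ _
  have h2 : phi T y * ‖f‖ ≤ phi T y * 1 :=
    mul_le_mul_of_nonneg_left hf (phi_nonneg T y)
  calc ‖(T f) y‖ = ‖((ContinuousMap.evalCLM ℝ y).comp T) f‖ := rfl
    _ ≤ phi T y * ‖f‖ := this
    _ ≤ phi T y := by linarith

lemma bddAbove_image (X : Set ℕ) : BddAbove (phi T '' starSet X) := by
  refine ⟨‖T‖, ?_⟩
  rintro r ⟨y, _, rfl⟩
  exact phi_le T y

lemma bddBelow_image (X : Set ℕ) : BddBelow (phi T '' starSet X) := by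
  refine ⟨0, ?_⟩
  rintro r ⟨y, _, rfl⟩
  exact phi_nonneg T y

/-- Key lemma: every infinite set has an infinite subset on whose star set
the oscillation of `phi` is at most `ε`. -/
lemma osc_small (A : Set ℕ) (hA : A.Infinite) (ε : ℝ) (hε : 0 < ε) :
    ∃ A', A' ⊆ A ∧ A'.Infinite ∧
      sSup (phi T '' starSet A') ≤ sInf (phi T '' starSet A') + ε := by
  by_contra hcon
  push_neg at hcon
  set S : Set ℝ :=
    {r | ∃ A', A' ⊆ A ∧ A'.Infinite ∧ r = sInf (phi T '' starSet A')} with hS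
  have hSne : S.Nonempty := ⟨sInf (phi T '' starSet A), A, subset_rfl, hA, rfl⟩
  have hSbdd : BddAbove S := by
    refine ⟨‖T‖, ?_⟩
    rintro r ⟨A', hsub, hinf, rfl⟩
    obtain ⟨y, hy⟩ := starSet_nonempty hinf
    exact csInf_le_of_le (bddBelow_image T A') ⟨y, hy, rfl⟩ (phi_le T y)
  set sA := sSup S with hsA
  obtain ⟨r, ⟨A', hsub, hinf, rfl⟩, hr⟩ := exists_lt_of_lt_csSup hSne (by linarith : sA - ε < sA)
  set m' := sInf (phi T '' starSet A') with hm'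
  have hosc := hcon A' hsub hinf
  have hne' : (starSet A').Nonempty := starSet_nonempty hinf
  obtain ⟨_, ⟨u, hu, rfl⟩, hgt⟩ :=
    exists_lt_of_lt_csSup (hne'.image (phi T)) hosc
  -- lower semicontinuity step
  obtain ⟨f, hfnorm, hflow⟩ :=
    ContinuousLinearMap.exists_lt_apply_of_lt_opNorm
      ((ContinuousMap.evalCLM ℝ u).comp T) hgt
  set h : C(NStar, ℝ) := T f with hh
  have hval : m' + ε < ‖h u‖ := hflow
  have hUopen : IsOpen {y : NStar | m' + ε < ‖h y‖} :=
    isOpen_lt continuous_const (h.continuous.norm)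
  obtain ⟨V, hVopen, hVU⟩ := isOpen_induced_iff.mp hUopen
  have huV : (u : Ultrafilter ℕ) ∈ V := by
    have : u ∈ {y : NStar | m' + ε < ‖h y‖} := hval
    rw [← hVU] at this
    exact this
  obtain ⟨o, ⟨C, rfl⟩, huC, hoV⟩ :=
    (ultrafilterBasis_is_basis (α := ℕ)).exists_subset_of_mem_open huV hVopen
  have hCu : C ∈ (u : Ultrafilter ℕ) := huC
  have hA'u : A' ∈ (u : Ultrafilter ℕ) := mem_starSet_iff.mp hu
  set A'' := C ∩ A' with hA''
  have hA''u : A'' ∈ (u : Ultrafilter ℕ) := Filter.inter_mem hCu hA'u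
  have hA''inf : A''.Infinite := infinite_of_mem hA''u
  have hA''A : A'' ⊆ A := fun n hn => hsub hn.2
  -- every point of A''* has phi > m' + ε
  have hbig : ∀ y ∈ starSet A'', m' + ε < phi T y := by
    intro y hy
    have hA''y : A'' ∈ (y : Ultrafilter ℕ) := mem_starSet_iff.mp hy
    have hCy : C ∈ (y : Ultrafilter ℕ) :=
      Filter.mem_of_superset hA''y Set.inter_subset_left
    have hyV : (y : Ultrafilter ℕ) ∈ V := hoV hCy
    have hyU : y ∈ {y : NStar | m' + ε < ‖h y‖} := by
      rw [← hVU]; exact hyV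
    have hphi : ‖h y‖ ≤ phi T y := abs_le_phi T y (le_of_lt hfnorm)
    exact lt_of_lt_of_le hyU hphi
  have hmA'' : m' + ε ≤ sInf (phi T '' starSet A'') := by
    refine le_csInf ((starSet_nonempty hA''inf).image _) ?_
    rintro r ⟨y, hy, rfl⟩
    exact le_of_lt (hbig y hy)
  have hmem : sInf (phi T '' starSet A'') ∈ S := ⟨A'', hA''A, hA''inf, rfl⟩
  have hle : sInf (phi T '' starSet A'') ≤ sA := le_csSup hSbdd hmem
  linarith

end Statement18Aux

open Statement18Aux in
/-- For every bounded operator `T` on `C(ℕ*)` and every infinite `B ⊆ ℕ` there are an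
infinite `B₁ ⊆ B` and `s ≥ 0` such that for every `y ∈ B₁*` the norm of the functional
`f ↦ (T f)(y)` equals `s`. -/
theorem statement18 (T : C(NStar, ℝ) →L[ℝ] C(NStar, ℝ)) (B : Set ℕ) (hB : B.Infinite) :
    ∃ B₁ ⊆ B, B₁.Infinite ∧ ∃ s : ℝ, 0 ≤ s ∧
      ∀ y ∈ starSet B₁, ‖(ContinuousMap.evalCLM ℝ y).comp T‖ = s := by
  classical
  -- choose shrinking function
  have key := fun (p : {A : Set ℕ // A.Infinite}) (n : ℕ) =>
    osc_small T p.1 p.2 (1 / (n + 1 : ℝ)) (by positivity)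
  choose F hF1 hF2 hF3 using key
  -- the decreasing sequence of sets
  let Aseq : ℕ → {A : Set ℕ // A.Infinite} :=
    fun n => Nat.rec ⟨B, hB⟩ (fun n p => ⟨F p n, hF2 p n⟩) n
  have hstep : ∀ n, (Aseq (n + 1)).1 ⊆ (Aseq n).1 := fun n => hF1 (Aseq n) n
  have hosc : ∀ n, sSup (phi T '' starSet (Aseq (n + 1)).1) ≤
      sInf (phi T '' starSet (Aseq (n + 1)).1) + 1 / (n + 1 : ℝ) := fun n => hF3 (Aseq n) n
  have hchain : ∀ m n, m ≤ n → (Aseq n).1 ⊆ (Aseq m).1 := by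
    intro m n hmn
    induction n with
    | zero => cases Nat.le_zero.mp hmn; exact subset_rfl
    | succ k ih =>
      rcases Nat.le_succ_iff_eq_or_le.mp (by omega : m ≤ k + 1) with h | h
      · subst h; exact subset_rfl
      · exact (hstep k).trans (ih h)
  have hsubB : ∀ n, (Aseq n).1 ⊆ B := fun n => hchain 0 n (Nat.zero_le n)
  -- pseudo-intersection: a strictly increasing sequence with b n ∈ Aseq n
  have hgt : ∀ n (k : ℕ), ∃ m ∈ (Aseq n).1, k < m := fun n => (Aseq n).2.exists_gt
  let b : ℕ → ℕ := fun n => Nat.rec (Classical.choose (hgt 0 0))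
    (fun n bn => Classical.choose (hgt (n + 1) bn)) n
  have hb0 : b 0 ∈ (Aseq 0).1 := (Classical.choose_spec (hgt 0 0)).1
  have hbsucc : ∀ n, b (n + 1) ∈ (Aseq (n + 1)).1 ∧ b n < b (n + 1) :=
    fun n => Classical.choose_spec (hgt (n + 1) (b n))
  have hbmem : ∀ n, b n ∈ (Aseq n).1 := by
    intro n; cases n with
    | zero => exact hb0
    | succ k => exact (hbsucc k).1
  have hbmono : StrictMono b := strictMono_nat_of_lt_succ (fun n => (hbsucc n).2)
  set B₁ : Set ℕ := Set.range b with hB₁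
  have hB₁B : B₁ ⊆ B := by
    rintro _ ⟨n, rfl⟩
    exact hsubB n (hbmem n)
  have hB₁inf : B₁.Infinite := Set.infinite_range_of_injective hbmono.injective
  -- B₁ is almost contained in each Aseq n
  have halmost : ∀ n, (B₁ \ (Aseq n).1).Finite := by
    intro n
    have hsub : B₁ \ (Aseq n).1 ⊆ b '' (Set.Iio n) := by
      rintro _ ⟨⟨k, rfl⟩, hk⟩
      refine ⟨k, ?_, rfl⟩
      by_contra hkn
      exact hk (hchain n k (by simpa using hkn) (hbmem k))
    exact ((Set.finite_Iio n).image b).subset hsub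
  have hstarsub : ∀ n, starSet B₁ ⊆ starSet (Aseq n).1 := by
    intro n y hy
    exact mem_starSet_iff.mpr
      (mem_of_diff_finite (mem_starSet_iff.mp hy) (halmost n))
  refine ⟨B₁, hB₁B, hB₁inf, sInf (phi T '' starSet B₁), ?_, ?_⟩
  · exact Real.sInf_nonneg (by rintro r ⟨y, _, rfl⟩; exact phi_nonneg T y)
  · intro y hy
    have himg : phi T y ∈ phi T '' starSet B₁ := ⟨y, hy, rfl⟩
    have hge : sInf (phi T '' starSet B₁) ≤ phi T y := csInf_le (bddBelow_image T B₁) himg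
    have hle : phi T y ≤ sInf (phi T '' starSet B₁) := by
      refine le_of_forall_pos_le_add ?_
      intro ε hε
      obtain ⟨n, hn⟩ := exists_nat_one_div_lt hε
      have hy' : y ∈ starSet (Aseq (n + 1)).1 := hstarsub (n + 1) hy
      have h1 : phi T y ≤ sSup (phi T '' starSet (Aseq (n + 1)).1) :=
        le_csSup (bddAbove_image T _) ⟨y, hy', rfl⟩
      have h2 : sInf (phi T '' starSet (Aseq (n + 1)).1) ≤ sInf (phi T '' starSet B₁) :=
        csInf_le_csInf (bddBelow_image T _) ⟨phi T y, himg⟩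
          (Set.image_mono (hstarsub (n + 1)))
      have := hosc n
      have hfin : phi T y ≤ sInf (phi T '' starSet B₁) + 1 / (n + 1 : ℝ) := by linarith
      linarith [le_of_lt hn]
    exact le_antisymm hle hge

end
end
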